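/- Let Γ be a finite simplicial graph, 𝒢 a collection of non-trivial groups indexed by V(Γ), and 𝒮 a collection of subgraphs of Γ. Let Ẋ denote the cone-off of X(Γ, 𝒢) over the collection {g⟨Λ⟩ : g ∈ Γ𝒢, Λ ∈ 𝒮}. If Λ ⊆ Γ is a subgraph whose intersection with every subgraph of 𝒮 is either empty or a complete graph, then the inclusion of ⟨Λ⟩ into Ẋ is a quasi-isometric embedding; more precisely, (1/clique(Γ))·d_X(x,y) ≤ d_Ẋ(x,y) ≤ d_X(x,y) for all vertices x, y ∈ ⟨Λ⟩. -/

import Mathlib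

/-- Word length distance on a group with respect to a generating set `S`. -/
noncomputable def wordDist {G : Type*} [Group G] (S : Set G) (g h : G) : ℕ :=
  sInf {n : ℕ | ∃ l : List G, l.length = n ∧ (∀ x ∈ l, x ∈ S ∨ x⁻¹ ∈ S) ∧ g⁻¹ * h = l.prod}

/-- The commutation relators defining a graph product. -/
def graphProductRels {V : Type*} (Γ : SimpleGraph V) (G : V → Type*) [∀ v, Group (G v)] :
    Set (Monoid.CoprodI G) :=
  {x | ∃ (u v : V) (a : G u) (b : G v), Γ.Adj u v ∧
    x = Monoid.CoprodI.of a * Monoid.CoprodI.of b * (Monoid.CoprodI.of a)⁻¹ *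
      (Monoid.CoprodI.of b)⁻¹}

/-- The graph product of the groups `G v` over the simplicial graph `Γ`. -/
def graphProduct {V : Type*} (Γ : SimpleGraph V) (G : V → Type*) [∀ v, Group (G v)] : Type _ :=
  Monoid.CoprodI G ⧸ Subgroup.normalClosure (graphProductRels Γ G)

instance {V : Type*} (Γ : SimpleGraph V) (G : V → Type*) [∀ v, Group (G v)] :
    Group (graphProduct Γ G) :=
  QuotientGroup.Quotient.group _

/-- The canonical morphism from a vertex group into the graph product. -/
def gpOf {V : Type*} (Γ : SimpleGraph V) (G : V → Type*) [∀ v, Group (G v)] (u : V) :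
    G u →* graphProduct Γ G :=
  (QuotientGroup.mk' _).comp Monoid.CoprodI.of

/-- The generating set of the graph product given by the union of (images of) the vertex
groups, with the identity removed. -/
def vertexGens {V : Type*} (Γ : SimpleGraph V) (G : V → Type*) [∀ v, Group (G v)] :
    Set (graphProduct Γ G) :=
  ⋃ u : V, (Set.range (gpOf Γ G u) \ {1})

/-- The parabolic subgroup `⟨Λ⟩` generated by the vertex groups of `Λ`. -/
def parabolic {V : Type*} (Γ : SimpleGraph V) (G : V → Type*) [∀ v, Group (G v)] (Λ : Set V) :
    Subgroup (graphProduct Γ G) :=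
  Subgroup.closure (⋃ u ∈ Λ, Set.range (gpOf Γ G u))

/-- The word metric on the graph product, with respect to the union of the vertex groups. -/
noncomputable def gpDist {V : Type*} (Γ : SimpleGraph V) (G : V → Type*) [∀ v, Group (G v)]
    (g h : graphProduct Γ G) : ℝ :=
  (wordDist (vertexGens Γ G) g h : ℝ)
/-- `a b c d` is an induced 4-cycle (induced square) of `Γ`, with diagonals `(a,c)` and `(b,d)`. -/
def IsInducedSquare {V : Type*} (Γ : SimpleGraph V) (a b c d : V) : Prop :=
  Γ.Adj a b ∧ Γ.Adj b c ∧ Γ.Adj c d ∧ Γ.Adj d a ∧ ¬Γ.Adj a c ∧ ¬Γ.Adj b d ∧ a ≠ c ∧ b ≠ d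

/-- A set of vertices is square-complete if every induced square of `Γ` having two opposite
vertices in it lies entirely in it. -/
def SquareComplete {V : Type*} (Γ : SimpleGraph V) (Λ : Set V) : Prop :=
  ∀ a b c d, IsInducedSquare Γ a b c d → a ∈ Λ → c ∈ Λ → b ∈ Λ ∧ d ∈ Λ

/-- `Λ` contains an induced square of `Γ`. -/
def HasInducedSquareIn {V : Type*} (Γ : SimpleGraph V) (Λ : Set V) : Prop :=
  ∃ a b c d, IsInducedSquare Γ a b c d ∧ a ∈ Λ ∧ b ∈ Λ ∧ c ∈ Λ ∧ d ∈ Λ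

/-- A minsquare subgraph: minimal among square-complete subgraphs containing an induced square. -/
def IsMinsquare {V : Type*} (Γ : SimpleGraph V) (Λ : Set V) : Prop :=
  SquareComplete Γ Λ ∧ HasInducedSquareIn Γ Λ ∧
    ∀ Λ' ⊆ Λ, SquareComplete Γ Λ' → HasInducedSquareIn Γ Λ' → Λ' = Λ

/-- A set of vertices spanning a complete subgraph. -/
def IsCompleteSet {V : Type*} (Γ : SimpleGraph V) (S : Set V) : Prop :=
  ∀ a ∈ S, ∀ b ∈ S, a ≠ b → Γ.Adj a b
/-- The Cayley graph of a group with respect to a set `S` of generators. -/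
def cayley {G : Type*} [Group G] (S : Set G) : SimpleGraph G where
  Adj x y := x ≠ y ∧ (x⁻¹ * y ∈ S ∨ y⁻¹ * x ∈ S)
  symm := ⟨by rintro x y ⟨h1, h2⟩; exact ⟨h1.symm, h2.symm⟩⟩
  loopless := ⟨fun x h => h.1 rfl⟩

/-- A connected graph is Gromov hyperbolic: there is `δ ≥ 0` such that all of its geodesic
triangles are `δ`-thin, i.e. every vertex on a geodesic between `x` and `y` is at distance at
most `δ` from a vertex lying on a geodesic from `x` to `z` or on a geodesic from `y` to `z`. -/
def GraphHyperbolic {X : Type*} (G : SimpleGraph X) : Prop :=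
  ∃ δ : ℕ, ∀ x y z p : X, G.dist x p + G.dist p y = G.dist x y →
    ∃ q : X, (G.dist x q + G.dist q z = G.dist x z ∨ G.dist y q + G.dist q z = G.dist y z) ∧
      G.dist p q ≤ δ
/-- The clique number of `Γ`: the maximal number of vertices of a complete subgraph. -/
noncomputable def cliqueNum {V : Type*} (Γ : SimpleGraph V) : ℕ :=
  sSup {n | ∃ s : Finset V, Γ.IsNClique n s}

/-- The Hausdorff distance between `A` and `B` in the graph metric of `G` is at most `C`. -/
def HausdorffLEN {X : Type*} (G : SimpleGraph X) (A B : Set X) (C : ℕ) : Prop :=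
  (∀ a ∈ A, ∃ b ∈ B, G.dist a b ≤ C) ∧ (∀ b ∈ B, ∃ a ∈ A, G.dist a b ≤ C)

/-- The cone-off of a graph over a collection `Ps` of sets of vertices: an edge is added between
any two distinct vertices lying in a common member of `Ps`. -/
def coneOff {X : Type*} (G : SimpleGraph X) (Ps : Set (Set X)) : SimpleGraph X where
  Adj x y := x ≠ y ∧ (G.Adj x y ∨ ∃ P ∈ Ps, x ∈ P ∧ y ∈ P)
  symm := ⟨by
    rintro x y ⟨h, h2 | ⟨P, hP, hx, hy⟩⟩
    · exact ⟨h.symm, Or.inl h2.symm⟩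
    · exact ⟨h.symm, Or.inr ⟨P, hP, hy, hx⟩⟩⟩
  loopless := ⟨fun x h => h.1 rfl⟩

section Lemma44Aux

open SimpleGraph

variable {Gp : Type*} [Group Gp]

private lemma cayley_adj_mul {S : Set Gp} (g x y : Gp) :
    (cayley S).Adj (g * x) (g * y) ↔ (cayley S).Adj x y := by
  have e1 : (g * x)⁻¹ * (g * y) = x⁻¹ * y := by group
  have e2 : (g * y)⁻¹ * (g * x) = y⁻¹ * x := by group
  constructor
  · rintro ⟨h1, h2⟩
    exact ⟨fun h => h1 (by rw [h]), by rwa [e1, e2] at h2⟩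
  · rintro ⟨h1, h2⟩
    exact ⟨fun h => h1 (mul_left_cancel h), by rwa [e1, e2]⟩

private def cayleyMulIso (S : Set Gp) (g : Gp) : cayley S ≃g cayley S where
  toEquiv := Equiv.mulLeft g
  map_rel_iff' := by intro a b; exact cayley_adj_mul g a b

private lemma iso_dist_le {X Y : Type*} {Gr : SimpleGraph X} {Gr' : SimpleGraph Y}
    (φ : Gr ≃g Gr') (u v : X) : Gr'.dist (φ u) (φ v) ≤ Gr.dist u v := by
  by_cases h : Gr.Reachable u v
  · obtain ⟨p, hp⟩ := h.exists_walk_length_eq_dist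
    calc Gr'.dist (φ u) (φ v) ≤ (p.map φ.toHom).length := dist_le _
      _ = p.length := Walk.length_map _ _
      _ = Gr.dist u v := hp
  · rw [dist_eq_zero_of_not_reachable h, dist_eq_zero_of_not_reachable]
    intro h'
    exact h (Iso.reachable_iff.mp h')

private lemma cayleyMulIso_apply (S : Set Gp) (g x : Gp) : cayleyMulIso S g x = g * x := rfl

private lemma cayley_dist_mul (S : Set Gp) (g x y : Gp) :
    (cayley S).dist (g * x) (g * y) = (cayley S).dist x y := by
  refine le_antisymm ?_ ?_
  · have := iso_dist_le (cayleyMulIso S g) x y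
    simpa [cayleyMulIso_apply] using this
  · have := iso_dist_le (cayleyMulIso S g⁻¹) (g * x) (g * y)
    simpa [cayleyMulIso_apply, inv_mul_cancel_left] using this

private lemma cayley_reachable_mul {S : Set Gp} (g : Gp) {x y : Gp}
    (h : (cayley S).Reachable x y) : (cayley S).Reachable (g * x) (g * y) := by
  have := h.map (cayleyMulIso S g).toHom
  exact this

private lemma dist_mul_gen (S : Set Gp) {s : Gp} (x : Gp) (hs : s ∈ S ∨ s = 1) :
    (cayley S).dist x (x * s) ≤ 1 := by
  rcases hs with hs | rfl
  · by_cases hxs : x = x * s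
    · rw [← hxs, SimpleGraph.dist_self]; exact Nat.zero_le _
    · have hadj : (cayley S).Adj x (x * s) := ⟨hxs, Or.inl (by rwa [inv_mul_cancel_left])⟩
      exact (dist_eq_one_iff_adj.mpr hadj).le
  · rw [mul_one, SimpleGraph.dist_self]
    exact Nat.zero_le _

private lemma dist_one_noncommProd {S : Set Gp} (hconn : (cayley S).Connected)
    {ι : Type*} [DecidableEq ι] (s : Finset ι) (F : ι → Gp) :
    ∀ (comm : (↑s : Set ι).Pairwise fun a b => Commute (F a) (F b)),
      (∀ i ∈ s, F i ∈ S ∨ F i = 1) →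
        (cayley S).dist 1 (s.noncommProd F comm) ≤ s.card := by
  induction s using Finset.induction_on with
  | empty => intro _ _; simp
  | @insert a s ha ih =>
    intro comm hF
    rw [Finset.noncommProd_insert_of_notMem _ _ _ _ ha]
    have h1 : (cayley S).dist 1 (F a) ≤ 1 := by
      simpa using dist_mul_gen S (1 : Gp) (hF a (Finset.mem_insert_self a s))
    have h2 : (cayley S).dist (F a)
        (F a * s.noncommProd F (comm.mono (Finset.coe_subset.mpr (Finset.subset_insert a s)))) =
        (cayley S).dist 1 (s.noncommProd F (comm.mono
          (Finset.coe_subset.mpr (Finset.subset_insert a s)))) := by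
      have := cayley_dist_mul S (F a) 1
        (s.noncommProd F (comm.mono (Finset.coe_subset.mpr (Finset.subset_insert a s))))
      simpa using this
    calc (cayley S).dist 1 (F a * s.noncommProd F _)
        ≤ (cayley S).dist 1 (F a) + (cayley S).dist (F a) (F a * s.noncommProd F _) :=
          hconn.dist_triangle
      _ ≤ 1 + s.card := by
          rw [h2]
          exact add_le_add h1 (ih _ (fun i hi => hF i (Finset.mem_insert_of_mem hi)))
      _ = (insert a s).card := by rw [Finset.card_insert_of_notMem ha]; omega

variable {V : Type*} {Γ : SimpleGraph V} {G : V → Type*} [∀ v, Group (G v)]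

open scoped commutatorElement in
private lemma gp_commute {u v : V} (h : Γ.Adj u v) (a : G u) (b : G v) :
    Commute (gpOf Γ G u a) (gpOf Γ G v b) := by
  rw [← commutatorElement_eq_one_iff_commute]
  have heq : ⁅gpOf Γ G u a, gpOf Γ G v b⁆ =
      QuotientGroup.mk' (Subgroup.normalClosure (graphProductRels Γ G))
        ⁅Monoid.CoprodI.of a, Monoid.CoprodI.of b⁆ := by
    simp only [commutatorElement_def, gpOf, MonoidHom.coe_comp, Function.comp_apply,
      map_mul, map_inv]
    rfl
  rw [heq, QuotientGroup.mk'_apply]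
  exact (QuotientGroup.eq_one_iff _).mpr
    (Subgroup.subset_normalClosure ⟨u, v, a, b, h, by rw [commutatorElement_def]⟩)

variable (Γ G) in
private noncomputable def retr (Λ : Set V) [DecidablePred (· ∈ Λ)] :
    graphProduct Γ G →* graphProduct Γ G :=
  QuotientGroup.lift (Subgroup.normalClosure (graphProductRels Γ G))
    (Monoid.CoprodI.lift (fun u => if u ∈ Λ then gpOf Γ G u else 1))
    (by
      apply Subgroup.normalClosure_le_normal
      rintro x ⟨u, v, a, b, hadj, rfl⟩
      rw [SetLike.mem_coe, MonoidHom.mem_ker]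
      simp only [map_mul, map_inv, Monoid.CoprodI.lift_of]
      by_cases hu : u ∈ Λ <;> by_cases hv : v ∈ Λ <;>
        simp only [hu, hv, if_pos, if_neg, MonoidHom.one_apply, if_true, if_false,
          inv_one, one_mul, mul_one, mul_inv_cancel, inv_mul_cancel]
      have := commutatorElement_eq_one_iff_commute.mpr (gp_commute hadj a b)
      rwa [commutatorElement_def] at this)

private lemma retr_gpOf (Λ : Set V) [DecidablePred (· ∈ Λ)] (u : V) (a : G u) :
    retr Γ G Λ (gpOf Γ G u a) = if u ∈ Λ then gpOf Γ G u a else 1 := by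
  show (QuotientGroup.lift _ _ _) (QuotientGroup.mk (Monoid.CoprodI.of a)) = _
  rw [QuotientGroup.lift_mk, Monoid.CoprodI.lift_of]
  split <;> rfl

private lemma retr_mem_gens {Λ : Set V} [DecidablePred (· ∈ Λ)] {s : graphProduct Γ G}
    (hs : s ∈ vertexGens Γ G) : retr Γ G Λ s ∈ vertexGens Γ G ∨ retr Γ G Λ s = 1 := by
  have hs' := hs
  rw [vertexGens, Set.mem_iUnion] at hs'
  obtain ⟨u, ⟨a, rfl⟩, -⟩ := hs'
  rw [retr_gpOf]
  split
  · exact Or.inl hs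
  · exact Or.inr rfl

private lemma retr_fixes {Λ : Set V} [DecidablePred (· ∈ Λ)] {x : graphProduct Γ G}
    (hx : x ∈ parabolic Γ G Λ) : retr Γ G Λ x = x := by
  induction hx using Subgroup.closure_induction with
  | mem y hy =>
    simp only [Set.mem_iUnion] at hy
    obtain ⟨u, hu, a, rfl⟩ := hy
    rw [retr_gpOf, if_pos hu]
  | one => exact map_one _
  | mul a b _ _ iha ihb => rw [map_mul, iha, ihb]
  | inv a _ iha => rw [map_inv, iha]

private lemma retr_parab {Λ T : Set V} [DecidablePred (· ∈ Λ)] {x : graphProduct Γ G}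
    (hx : x ∈ parabolic Γ G T) : retr Γ G Λ x ∈ parabolic Γ G (Λ ∩ T) := by
  induction hx using Subgroup.closure_induction with
  | mem y hy =>
    simp only [Set.mem_iUnion] at hy
    obtain ⟨u, hu, a, rfl⟩ := hy
    rw [retr_gpOf]
    split
    · next h => exact Subgroup.subset_closure (Set.mem_iUnion₂.mpr ⟨u, ⟨h, hu⟩, a, rfl⟩)
    · exact one_mem _
  | one => rw [map_one]; exact one_mem _
  | mul a b _ _ iha ihb => rw [map_mul]; exact mul_mem iha ihb
  | inv a _ iha => rw [map_inv]; exact inv_mem iha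

variable (Γ G) in
private lemma gp_top : Subgroup.closure (vertexGens Γ G) = ⊤ := by
  rw [eq_top_iff]
  rintro g -
  induction g using QuotientGroup.induction_on with
  | _ w =>
    induction w using Monoid.CoprodI.induction_on with
    | one =>
      have : (QuotientGroup.mk (1 : Monoid.CoprodI G) : graphProduct Γ G) = 1 := rfl
      rw [this]; exact one_mem _
    | of u m =>
      have : (QuotientGroup.mk (Monoid.CoprodI.of m) : graphProduct Γ G) = gpOf Γ G u m := rfl
      rw [this]
      by_cases h : gpOf Γ G u m = 1
      · rw [h]; exact one_mem _
      · exact Subgroup.subset_closure (Set.mem_iUnion.mpr ⟨u, ⟨m, rfl⟩, h⟩)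
    | mul a b iha ihb =>
      have : (QuotientGroup.mk (a * b) : graphProduct Γ G) =
          QuotientGroup.mk a * QuotientGroup.mk b := rfl
      rw [this]; exact mul_mem iha ihb

variable (Γ G) in
private lemma cayley_conn : (cayley (vertexGens Γ G)).Connected := by
  have key : ∀ z : graphProduct Γ G, (cayley (vertexGens Γ G)).Reachable 1 z := by
    intro z
    have hz : z ∈ Subgroup.closure (vertexGens Γ G) := by rw [gp_top]; trivial
    induction hz using Subgroup.closure_induction with
    | mem s hs =>
      have hne : (1 : graphProduct Γ G) ≠ s := by
        rintro rfl
        rw [vertexGens, Set.mem_iUnion] at hs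
        obtain ⟨u, -, h1⟩ := hs
        exact h1 rfl
      exact SimpleGraph.Adj.reachable ⟨hne, Or.inl (by simpa using hs)⟩
    | one => exact Reachable.refl _
    | mul a b _ _ iha ihb =>
      refine iha.trans ?_
      have := cayley_reachable_mul a ihb
      simpa using this
    | inv a _ iha =>
      have := cayley_reachable_mul a⁻¹ iha
      simp only [mul_one, inv_mul_cancel] at this
      exact this.symm
  haveI : Nonempty (graphProduct Γ G) := ⟨1⟩
  refine ⟨fun x y => ?_⟩
  have := cayley_reachable_mul x (key (x⁻¹ * y))
  simpa [mul_inv_cancel_left] using this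

variable [Fintype V]

variable (Γ) in
private lemma cliqueNum_bdd : BddAbove {n | ∃ s : Finset V, Γ.IsNClique n s} :=
  ⟨Fintype.card V, fun n ⟨s, hs⟩ => hs.2 ▸ Finset.card_le_univ s⟩

variable (Γ) in
private lemma finset_card_le_clique (s : Finset V)
    (hs : ∀ a ∈ s, ∀ b ∈ s, a ≠ b → Γ.Adj a b) : s.card ≤ _root_.cliqueNum Γ :=
  le_csSup (cliqueNum_bdd Γ) ⟨s, ⟨fun a ha b hb hab => hs a ha b hb hab, rfl⟩⟩

private lemma dist_le_clique {K : Set V} (hK : IsCompleteSet Γ K) {g : graphProduct Γ G}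
    (hg : g ∈ parabolic Γ G K) : (cayley (vertexGens Γ G)).dist 1 g ≤ _root_.cliqueNum Γ := by
  classical
  haveI : Fintype ↥K := Fintype.ofFinite _
  have hpar : parabolic Γ G K = ⨆ (u : K), (gpOf Γ G u.1).range := by
    rw [parabolic, Set.biUnion_eq_iUnion, Subgroup.closure_iUnion]
    refine iSup_congr fun u => ?_
    rw [← MonoidHom.coe_range, Subgroup.closure_eq]
  have hcomm : Pairwise fun (i j : ↥K) => ∀ (x : G i.1) (y : G j.1),
      Commute (gpOf Γ G i.1 x) (gpOf Γ G j.1 y) := by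
    intro i j hij x y
    exact gp_commute (hK i.1 i.2 j.1 j.2 (fun h => hij (Subtype.ext h))) x y
  rw [hpar, ← MonoidHom.noncommPiCoprod_range (ϕ := fun u : ↥K => gpOf Γ G u.1)
    (hcomm := hcomm)] at hg
  obtain ⟨f, rfl⟩ := hg
  rw [MonoidHom.noncommPiCoprod_apply]
  have hF : ∀ i ∈ (Finset.univ : Finset ↥K),
      gpOf Γ G i.1 (f i) ∈ vertexGens Γ G ∨ gpOf Γ G i.1 (f i) = 1 := by
    intro i _
    by_cases h : gpOf Γ G i.1 (f i) = 1
    · exact Or.inr h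
    · exact Or.inl (Set.mem_iUnion.mpr ⟨i.1, ⟨f i, rfl⟩, h⟩)
  refine le_trans (dist_one_noncommProd (cayley_conn Γ G) Finset.univ _ _ hF) ?_
  rw [Finset.card_univ, ← Set.toFinset_card]
  refine finset_card_le_clique Γ K.toFinset fun a ha b hb hab => ?_
  rw [Set.mem_toFinset] at ha hb
  exact hK a ha b hb hab

private lemma edge_bound {S : Set (Set V)} {Λ : Set V} [DecidablePred (· ∈ Λ)]
    (hΛ : ∀ T ∈ S, Λ ∩ T = ∅ ∨ IsCompleteSet Γ (Λ ∩ T))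
    {p q : graphProduct Γ G}
    (h : (coneOff (cayley (vertexGens Γ G))
      {P | ∃ g : graphProduct Γ G, ∃ T ∈ S,
        P = (g * ·) '' (parabolic Γ G T : Set (graphProduct Γ G))}).Adj p q) :
    (cayley (vertexGens Γ G)).dist (retr Γ G Λ p) (retr Γ G Λ q) ≤ _root_.cliqueNum Γ := by
  obtain ⟨hne, hadj | ⟨P, ⟨g, T, hT, rfl⟩, hp, hq⟩⟩ := h
  · have hVne : Nonempty V := by
      by_contra hV
      rw [not_nonempty_iff] at hV
      apply hne
      have hgen : vertexGens Γ G = (∅ : Set (graphProduct Γ G)) := Set.iUnion_of_empty _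
      have h1 : p ∈ Subgroup.closure (vertexGens Γ G) := by rw [gp_top]; trivial
      have h2 : q ∈ Subgroup.closure (vertexGens Γ G) := by rw [gp_top]; trivial
      rw [hgen, Subgroup.closure_empty, Subgroup.mem_bot] at h1 h2
      rw [h1, h2]
    have hclique1 : 1 ≤ _root_.cliqueNum Γ := by
      obtain ⟨v⟩ := hVne
      have := finset_card_le_clique Γ {v} (by simp)
      simpa using this
    refine le_trans ?_ hclique1
    obtain ⟨-, hs | hs⟩ := hadj
    · have he : retr Γ G Λ p * retr Γ G Λ (p⁻¹ * q) = retr Γ G Λ q := by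
        rw [← map_mul, mul_inv_cancel_left]
      rw [← he]
      exact dist_mul_gen _ _ (retr_mem_gens hs)
    · rw [SimpleGraph.dist_comm]
      have he : retr Γ G Λ q * retr Γ G Λ (q⁻¹ * p) = retr Γ G Λ p := by
        rw [← map_mul, mul_inv_cancel_left]
      rw [← he]
      exact dist_mul_gen _ _ (retr_mem_gens hs)
  · obtain ⟨a, ha, hpa⟩ := hp
    obtain ⟨b, hb, hqb⟩ := hq
    simp only at hpa hqb
    subst hpa hqb
    have hmem : (g * a)⁻¹ * (g * b) ∈ parabolic Γ G T := by
      have e : (g * a)⁻¹ * (g * b) = a⁻¹ * b := by group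
      rw [e]; exact mul_mem (inv_mem ha) hb
    have hmem2 := retr_parab (Λ := Λ) hmem
    have he : retr Γ G Λ (g * a) * retr Γ G Λ ((g * a)⁻¹ * (g * b)) = retr Γ G Λ (g * b) := by
      rw [← map_mul, mul_inv_cancel_left]
    rcases hΛ T hT with hemp | hcomp
    · rw [hemp] at hmem2
      have h1 : retr Γ G Λ ((g * a)⁻¹ * (g * b)) = 1 := by
        rw [parabolic] at hmem2
        simpa [Subgroup.closure_empty, Subgroup.mem_bot] using hmem2
      rw [← he, h1, mul_one, SimpleGraph.dist_self]
      exact Nat.zero_le _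
    · rw [← he]
      have hd := dist_le_clique hcomp hmem2
      have e2 := cayley_dist_mul (vertexGens Γ G) (retr Γ G Λ (g * a)) 1
        (retr Γ G Λ ((g * a)⁻¹ * (g * b)))
      rw [mul_one] at e2
      rw [e2]
      exact hd

end Lemma44Aux

/-- **(Lemma 4.4.)** Let `S` be a collection of subgraphs of `Γ` and `Ẋ` the cone-off of
`X(Γ, 𝒢)` over the cosets `g⟨S⟩`, `S ∈ 𝒮`. If `Λ ⊆ Γ` intersects every member of `𝒮` along an
empty or complete subgraph, then `⟨Λ⟩` is quasi-isometrically embedded in `Ẋ`: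
`(1/clique(Γ)) · d_X ≤ d_Ẋ ≤ d_X` on `⟨Λ⟩`. -/
theorem parabolic_qi_embedded_in_cone_off
    {V : Type*} [Fintype V] (Γ : SimpleGraph V) (G : V → Type*)
    [∀ v, Group (G v)] [∀ v, Nontrivial (G v)]
    (S : Set (Set V)) (Λ : Set V)
    (hΛ : ∀ T ∈ S, Λ ∩ T = ∅ ∨ IsCompleteSet Γ (Λ ∩ T)) :
    ∀ x ∈ (parabolic Γ G Λ : Set (graphProduct Γ G)),
      ∀ y ∈ (parabolic Γ G Λ : Set (graphProduct Γ G)),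
        (cayley (vertexGens Γ G)).dist x y ≤
            cliqueNum Γ * (coneOff (cayley (vertexGens Γ G))
              {P | ∃ g : graphProduct Γ G, ∃ T ∈ S,
                P = (g * ·) '' (parabolic Γ G T : Set (graphProduct Γ G))}).dist x y ∧
          (coneOff (cayley (vertexGens Γ G))
              {P | ∃ g : graphProduct Γ G, ∃ T ∈ S,
                P = (g * ·) '' (parabolic Γ G T : Set (graphProduct Γ G))}).dist x y ≤
            (cayley (vertexGens Γ G)).dist x y := by
  classical
  intro x hx y hy
  set Ps : Set (Set (graphProduct Γ G)) :=
    {P | ∃ g : graphProduct Γ G, ∃ T ∈ S,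
      P = (g * ·) '' (parabolic Γ G T : Set (graphProduct Γ G))} with hPs
  have hconn := cayley_conn Γ G
  have hle : cayley (vertexGens Γ G) ≤ coneOff (cayley (vertexGens Γ G)) Ps := by
    intro a b hab
    exact ⟨hab.ne, Or.inl hab⟩
  constructor
  · have hreach : (coneOff (cayley (vertexGens Γ G)) Ps).Reachable x y :=
      (hconn.preconnected x y).mono hle
    obtain ⟨w, hw⟩ := hreach.exists_walk_length_eq_dist
    have key : ∀ (z₁ z₂ : graphProduct Γ G)
        (w : (coneOff (cayley (vertexGens Γ G)) Ps).Walk z₁ z₂),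
        (cayley (vertexGens Γ G)).dist (retr Γ G Λ z₁) (retr Γ G Λ z₂) ≤
          cliqueNum Γ * w.length := by
      intro z₁ z₂ w
      induction w with
      | nil => simp
      | @cons c d e hcd w ih =>
        rw [SimpleGraph.Walk.length_cons]
        calc (cayley (vertexGens Γ G)).dist (retr Γ G Λ c) (retr Γ G Λ e)
            ≤ (cayley (vertexGens Γ G)).dist (retr Γ G Λ c) (retr Γ G Λ d) +
              (cayley (vertexGens Γ G)).dist (retr Γ G Λ d) (retr Γ G Λ e) :=
              hconn.dist_triangle
          _ ≤ cliqueNum Γ + cliqueNum Γ * w.length := add_le_add (edge_bound hΛ hcd) ih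
          _ = cliqueNum Γ * (w.length + 1) := by ring
    have := key x y w
    rwa [retr_fixes hx, retr_fixes hy, hw] at this
  · exact SimpleGraph.Reachable.dist_anti hle (hconn.preconnected x y)
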